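/- Let f be a picture from Young diagram λ to skew diagram E. For each box T = (i',j') of E, define its readiness number r(T) = i − i' where (i,j) = f^{-1}(T). Then in E the readiness numbers are weakly decreasing along each row (left to right) and weakly increasing down each column. -/
import Mathlib


/-- Lexicographic order on boxes `(row, column)` (smaller row index = higher). -/
def LexLt (A B : ℕ × ℕ) : Prop := A.1 < B.1 ∨ (A.1 = B.1 ∧ A.2 < B.2)

/-- `A` is weakly above and weakly right of `B`. -/
def AboveRight (A B : ℕ × ℕ) : Prop := A.1 ≤ B.1 ∧ B.2 ≤ A.2

/-- Let `f` be a picture from a Young diagram `D` (rows given by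
a weakly increasing length function) to a skew diagram `E = λ/μ` (row `i` of
`E` consists of boxes `(i, c)` with `muE i ≤ c < lamE i`, `lamE` and `muE`
weakly increasing).  For `T ∈ E` define its readiness number `(g T).1 − T.1`,
where `g = f⁻¹`.  Then in `E` the readiness numbers weakly decrease along each
row (left to right) and weakly increase down each column. -/
theorem stmt12 (rows rowsE : ℕ) (len lamE muE : ℕ → ℕ)
    (hlen : Monotone len) (hlamE : Monotone lamE) (hmuE : Monotone muE)
    (hml : ∀ i, muE i ≤ lamE i)
    (D E : Finset (ℕ × ℕ))
    (hD : ∀ p : ℕ × ℕ, p ∈ D ↔ p.1 < rows ∧ p.2 < len p.1)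
    (hE : ∀ p : ℕ × ℕ, p ∈ E ↔ p.1 < rowsE ∧ muE p.1 ≤ p.2 ∧ p.2 < lamE p.1)
    (f g : ℕ × ℕ → ℕ × ℕ)
    (hf : Set.BijOn f ↑D ↑E) (hg : Set.InvOn g f ↑D ↑E)
    (hpic : ∀ A ∈ D, ∀ B ∈ D, A ≠ B → AboveRight A B → LexLt (f A) (f B))
    (hpic' : ∀ A ∈ E, ∀ B ∈ E, A ≠ B → AboveRight A B → LexLt (g A) (g B)) :
    (∀ A ∈ E, ∀ B ∈ E, A.1 = B.1 → A.2 ≤ B.2 →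
      ((g B).1 : ℤ) - B.1 ≤ ((g A).1 : ℤ) - A.1) ∧
    (∀ A ∈ E, ∀ B ∈ E, A.2 = B.2 → A.1 ≤ B.1 →
      ((g A).1 : ℤ) - A.1 ≤ ((g B).1 : ℤ) - B.1) := by
  have gD : ∀ T ∈ E, g T ∈ D := by
    intro T hT
    obtain ⟨a, ha, rfl⟩ := hf.surjOn hT
    rw [hg.1 ha]; exact ha
  have step : ∀ A ∈ E, ∀ B ∈ E, B.1 = A.1 + 1 → B.2 = A.2 →
      (g A).1 + 1 ≤ (g B).1 := by
    intro A hA B hB h1 h2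
    have hAB : A ≠ B := by
      intro h; rw [h] at h1; omega
    have har : AboveRight A B := ⟨by omega, le_of_eq h2⟩
    have hlex := hpic' A hA B hB hAB har
    rcases hlex with h | ⟨he, hlt⟩
    · omega
    · exfalso
      have hgA := gD A hA
      have hgB := gD B hB
      have hne : g B ≠ g A := by
        intro h; rw [h] at hlt; omega
      have har2 : AboveRight (g B) (g A) := ⟨le_of_eq he.symm, le_of_lt hlt⟩
      have hcon := hpic (g B) hgB (g A) hgA hne har2
      rw [hg.2 hB, hg.2 hA] at hcon
      rcases hcon with h | ⟨he2, _⟩ <;> omega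
  have col : ∀ d : ℕ, ∀ A : ℕ × ℕ, A ∈ E → (A.1 + d, A.2) ∈ E →
      (g A).1 + d ≤ (g (A.1 + d, A.2)).1 := by
    intro d
    induction d with
    | zero => intro A hA _; simp
    | succ d ih =>
      intro A hA hB
      have hmid : (A.1 + d, A.2) ∈ E := by
        rw [hE] at hA hB ⊢
        refine ⟨by omega,
          le_trans (hmuE (by omega : A.1 + d ≤ A.1 + (d + 1))) hB.2.1,
          lt_of_lt_of_le hA.2.2 (hlamE (by omega : A.1 ≤ A.1 + d))⟩
      have h1 := ih A hA hmid
      have h2 := step (A.1 + d, A.2) hmid (A.1 + (d + 1), A.2) hB rfl rfl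
      omega
  constructor
  · intro A hA B hB h1 h2
    rcases eq_or_lt_of_le h2 with heq | hlt
    · have hAB : A = B := Prod.ext h1 heq
      rw [hAB]
    · have har : AboveRight B A := ⟨le_of_eq h1.symm, le_of_lt hlt⟩
      have hne : B ≠ A := by intro h; rw [h] at hlt; omega
      have := hpic' B hB A hA hne har
      rcases this with h | ⟨he, _⟩ <;> omega
  · intro A hA B hB h1 h2
    have hBeq : B = (A.1 + (B.1 - A.1), A.2) := Prod.ext (by omega) h1.symm
    have := col (B.1 - A.1) A hA (by rw [← hBeq]; exact hB)
    rw [← hBeq] at this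
    omega
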